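/- SHSMs can be exponentially more succinct than restricted SHSMs: there exist a constant c > 0, a polynomial p, and for every n ∈ ℕ an SHSM M_n with |M_n| ≤ p(n), such that every restricted SHSM M' whose flat Kripke structure (M')^F is isomorphic to M_n^F satisfies |M'| ≥ 2^{cn}. -/

import Mathlib

/-- A Scope-dependent Hierarchical State Machine over `AP`.  Machines are indexed by
`Fin h` (index `i` represents the `(i+1)`-st machine `M_{i+1}` of the paper); the
expansion map returns `none` on nodes and `some j` on a box expanding to machine `j`,
with `j < i` (only lower-indexed machines).  Edges are plain edges `(u,v)` (from nodes)
and box edges `((u,z),v)` (from a box `u` through an output vertex `z`). -/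
structure SHSM (AP : Type) where
  h : ℕ
  hpos : 0 < h
  V : Fin h → Type
  Vfin : ∀ i, Fintype (V i)
  init : ∀ i, V i
  out : ∀ i, Set (V i)
  label : ∀ i, V i → Set AP
  expand : ∀ i, V i → Option (Fin h)
  expand_lt : ∀ i u j, expand i u = some j → (j : ℕ) < (i : ℕ)
  init_node : ∀ i, expand i (init i) = none
  out_node : ∀ i, ∀ z ∈ out i, expand i z = none
  Eplain : ∀ i, V i → V i → Prop
  Ebox : ∀ i, V i → ∀ j, V j → V i → Prop
  Eplain_node : ∀ i u v, Eplain i u v → expand i u = none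
  Ebox_ok : ∀ i u j z v, Ebox i u j z v → expand i u = some j ∧ z ∈ out j

namespace SHSM

variable {AP : Type}

instance (M : SHSM AP) (i : Fin M.h) : Fintype (M.V i) := M.Vfin i

/-- The disjoint union of all vertex sets of `M`. -/
abbrev Vt (M : SHSM AP) : Type := Σ i : Fin M.h, M.V i

/-- The index of the top-level machine `M_h`. -/
def top (M : SHSM AP) : Fin M.h := ⟨M.h - 1, Nat.sub_lt M.hpos Nat.one_pos⟩

/-- `x` is a node (it does not expand to any machine). -/
def IsNode (M : SHSM AP) (x : M.Vt) : Prop := M.expand x.1 x.2 = none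

/-- The expansion step relation: `u_{ℓ+1} ∈ V_{expand(u_ℓ)}`. -/
def stepRel (M : SHSM AP) : M.Vt → M.Vt → Prop :=
  fun a b => M.expand a.1 a.2 = some b.1

/-- A well-formed sequence of vertices `u₁ … u_m` (`m ≥ 1`) with
`u_{ℓ+1} ∈ V_{expand(u_ℓ)}`. -/
def WFSeq (M : SHSM AP) (l : List M.Vt) : Prop :=
  l ≠ [] ∧ l.Chain' M.stepRel

/-- A well-formed sequence which starts in machine `j` and ends at a node.
For `j = M.top` these are exactly the complete well-formed sequences, i.e. the
states of the flat Kripke structure `M^F`; for general `j` they are the states of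
the flat Kripke structure of the sub-SHSM `(M₁,…,M_j)`. -/
def CompleteAt (M : SHSM AP) (j : Fin M.h) (l : List M.Vt) : Prop :=
  M.WFSeq l ∧ (∃ x, l.head? = some x ∧ x.1 = j) ∧ (∃ x, l.getLast? = some x ∧ M.IsNode x)

/-- A complete well-formed sequence: a state of the flat Kripke structure `M^F`. -/
def Complete (M : SHSM AP) (l : List M.Vt) : Prop :=
  M.CompleteAt M.top l

/-- The transition relation of the flat Kripke structure `M^F`, given by the four kinds
of moves induced by the edges of `M`: node to node, node to box, box to node (through an
output vertex), and box to box. -/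
def FlatTrans (M : SHSM AP) (X Y : List M.Vt) : Prop :=
  (∃ (p : List M.Vt) (i : Fin M.h) (a b : M.V i),
      X = p ++ [⟨i, a⟩] ∧ Y = p ++ [⟨i, b⟩] ∧
      M.Eplain i a b ∧ M.expand i b = none) ∨
  (∃ (p : List M.Vt) (i : Fin M.h) (a b : M.V i) (j : Fin M.h),
      X = p ++ [⟨i, a⟩] ∧ Y = p ++ [⟨i, b⟩, ⟨j, M.init j⟩] ∧
      M.Eplain i a b ∧ M.expand i b = some j) ∨
  (∃ (p : List M.Vt) (i : Fin M.h) (a : M.V i) (j : Fin M.h) (z : M.V j) (v : M.V i),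
      X = p ++ [⟨i, a⟩, ⟨j, z⟩] ∧ Y = p ++ [⟨i, v⟩] ∧
      M.Ebox i a j z v ∧ M.expand i v = none) ∨
  (∃ (p : List M.Vt) (i : Fin M.h) (a : M.V i) (j : Fin M.h) (z : M.V j) (b : M.V i)
      (j' : Fin M.h),
      X = p ++ [⟨i, a⟩, ⟨j, z⟩] ∧ Y = p ++ [⟨i, b⟩, ⟨j', M.init j'⟩] ∧
      M.Ebox i a j z b ∧ M.expand i b = some j')

/-- The label of a state of `M^F`: the union of the labels of the vertices occurring
in the sequence. -/
def flatLabel (M : SHSM AP) (l : List M.Vt) : Set AP :=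
  {p | ∃ x ∈ l, p ∈ M.label x.1 x.2}

/-- The initial state `⟨in_h⟩` of `M^F`. -/
def initSeq (M : SHSM AP) : List M.Vt := [⟨M.top, M.init M.top⟩]

lemma initSeq_complete (M : SHSM AP) : M.Complete M.initSeq :=
  ⟨⟨by simp [initSeq], by exact List.isChain_singleton _⟩,
   ⟨⟨M.top, M.init M.top⟩, rfl, rfl⟩,
   ⟨⟨M.top, M.init M.top⟩, by simp [initSeq], M.init_node M.top⟩⟩

/-- The states of the flat Kripke structure `M^F`. -/
def States (M : SHSM AP) : Type := {l : List M.Vt // M.Complete l}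

/-- `M` is an HSM: boxes carry no atomic propositions. -/
def IsHSM (M : SHSM AP) : Prop :=
  ∀ i (u : M.V i), M.expand i u ≠ none → M.label i u = ∅

/-- The size of `M`: total number of vertices plus total number of edges. -/
noncomputable def size (M : SHSM AP) : ℕ :=
  Fintype.card M.Vt
  + {e : Σ i : Fin M.h, M.V i × M.V i | M.Eplain e.1 e.2.1 e.2.2}.ncard
  + {e : Σ (i : Fin M.h) (j : Fin M.h), M.V i × M.V j × M.V i |
       M.Ebox e.1 e.2.2.1 e.2.1 e.2.2.2.1 e.2.2.2.2}.ncard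

/-- `expand⁺`: machine `j` belongs to the iterated expansion of vertex `u`. -/
inductive InExpandPlus (M : SHSM AP) : M.Vt → Fin M.h → Prop where
  | base {i : Fin M.h} {u : M.V i} {j : Fin M.h} :
      M.expand i u = some j → InExpandPlus M ⟨i, u⟩ j
  | step {i : Fin M.h} {u : M.V i} {j : Fin M.h} (u' : M.V j) {j' : Fin M.h} :
      M.expand i u = some j → InExpandPlus M ⟨j, u'⟩ j' → InExpandPlus M ⟨i, u⟩ j'

/-- `u` is an ancestor of `v`: `v` lies in a machine belonging to `expand⁺(u)`. -/
def Ancestor (M : SHSM AP) (u v : M.Vt) : Prop :=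
  M.InExpandPlus u v.1

/-- A restricted SHSM: labels of a vertex and of any of its descendants are disjoint. -/
def Restricted (M : SHSM AP) : Prop :=
  ∀ u v : M.Vt, M.Ancestor u v → M.label u.1 u.2 ∩ M.label v.1 v.2 = ∅

end SHSM

/-- The flat Kripke structures of `M` and `M'` are isomorphic: a bijection of states
mapping the initial state to the initial state and preserving transitions and labels. -/
def FlatIso {AP : Type} (M M' : SHSM AP) : Prop :=
  ∃ f : M.States ≃ M'.States,
    f ⟨M.initSeq, M.initSeq_complete⟩ = ⟨M'.initSeq, M'.initSeq_complete⟩ ∧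
    (∀ X Y : M.States, M.FlatTrans X.1 Y.1 ↔ M'.FlatTrans (f X).1 (f Y).1) ∧
    (∀ X : M.States, M.flatLabel X.1 = M'.flatLabel (f X).1)

namespace SuccinctAux

open SHSM

variable {AP : Type}

/-- Along a `stepRel`-chain, every vertex is related by `InExpandPlus` to the
machine of every later vertex. -/
lemma chain'_pairwise (M : SHSM AP) :
    ∀ l : List M.Vt, l.Chain' M.stepRel →
      l.Pairwise (fun u v => M.InExpandPlus u v.1) := by
  intro l
  induction l with
  | nil => intro _; exact List.Pairwise.nil
  | cons a t ih =>
    intro h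
    have ht : t.Chain' M.stepRel := (List.isChain_cons.mp h).2
    have hp := ih ht
    refine List.Pairwise.cons ?_ hp
    intro v hv
    cases t with
    | nil => cases hv
    | cons b t' =>
      have hab : M.stepRel a b := (List.isChain_cons_cons.mp h).1
      rcases List.mem_cons.mp hv with rfl | hv'
      · exact InExpandPlus.base hab
      · have hbv : M.InExpandPlus b v.1 := (List.pairwise_cons.mp hp).1 v hv'
        exact InExpandPlus.step b.2 hab hbv

lemma flatLabel_append (M : SHSM AP) (l₁ l₂ : List M.Vt) :
    M.flatLabel (l₁ ++ l₂) = M.flatLabel l₁ ∪ M.flatLabel l₂ := by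
  ext m
  simp only [SHSM.flatLabel, Set.mem_setOf_eq, List.mem_append, Set.mem_union]
  constructor
  · rintro ⟨u, hu | hu, hm⟩
    · exact Or.inl ⟨u, hu, hm⟩
    · exact Or.inr ⟨u, hu, hm⟩
  · rintro (⟨u, hu, hm⟩ | ⟨u, hu, hm⟩)
    · exact ⟨u, Or.inl hu, hm⟩
    · exact ⟨u, Or.inr hu, hm⟩

lemma flatLabel_single (M : SHSM AP) (u : M.Vt) :
    M.flatLabel [u] = M.label u.1 u.2 := by
  ext m
  simp [SHSM.flatLabel]

lemma flatLabel_pair (M : SHSM AP) (u v : M.Vt) :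
    M.flatLabel [u, v] = M.label u.1 u.2 ∪ M.label v.1 v.2 := by
  ext m
  simp [SHSM.flatLabel, or_and_right, exists_or]

/-- label of the initial vertex of the machine a vertex expands to (if any). -/
def optLab (M : SHSM AP) (i : Fin M.h) (b : M.V i) : Set AP :=
  (M.expand i b).elim ∅ (fun j => M.label j (M.init j))

def psiP (M : SHSM AP) (e : Σ i : Fin M.h, M.V i × M.V i) : Set AP :=
  M.label e.1 e.2.1 \ (M.label e.1 e.2.2 ∪ optLab M e.1 e.2.2)

def psiB (M : SHSM AP)
    (e : Σ (i : Fin M.h) (j : Fin M.h), M.V i × M.V j × M.V i) : Set AP :=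
  (M.label e.1 e.2.2.1 ∪ M.label e.2.1 e.2.2.2.1) \
    (M.label e.1 e.2.2.2.2 ∪ optLab M e.1 e.2.2.2.2)

end SuccinctAux
namespace SuccinctAux

open SHSM

variable {AP : Type}

/-- In a restricted SHSM, the "lost label set" of any flat transition from a complete
state is determined by the edge inducing the transition. -/
lemma key (M : SHSM AP) (hR : M.Restricted) {X Y : List M.Vt}
    (hX : M.Complete X) (hT : M.FlatTrans X Y) :
    (∃ e : Σ i : Fin M.h, M.V i × M.V i, M.Eplain e.1 e.2.1 e.2.2 ∧
        M.flatLabel X \ M.flatLabel Y = psiP M e) ∨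
    (∃ e : Σ (i : Fin M.h) (j : Fin M.h), M.V i × M.V j × M.V i,
        M.Ebox e.1 e.2.2.1 e.2.1 e.2.2.2.1 e.2.2.2.2 ∧
        M.flatLabel X \ M.flatLabel Y = psiB M e) := by
  have hchain : X.Chain' M.stepRel := hX.1.2
  have hpw := chain'_pairwise M X hchain
  rcases hT with ⟨p, i, a, b, hXe, hYe, hE, hexp⟩ |
    ⟨p, i, a, b, j, hXe, hYe, hE, hexp⟩ |
    ⟨p, i, a, j, z, v, hXe, hYe, hE, hexp⟩ |
    ⟨p, i, a, j, z, b, j', hXe, hYe, hE, hexp⟩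
  · -- node to node
    left
    refine ⟨⟨i, (a, b)⟩, hE, ?_⟩
    subst hXe; subst hYe
    rw [flatLabel_append, flatLabel_append, flatLabel_single, flatLabel_single]
    have hcross := (List.pairwise_append.mp hpw).2.2
    have hd : ∀ m ∈ M.label i a, m ∉ M.flatLabel p := by
      intro m hm ⟨u, hu, hmu⟩
      have hanc : M.Ancestor u ⟨i, a⟩ := hcross u hu ⟨i, a⟩ (by simp)
      have := hR u ⟨i, a⟩ hanc
      exact absurd this (by
        rw [Set.eq_empty_iff_forall_notMem] at this ⊢
        exact fun _ => this m ⟨hmu, hm⟩)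
    ext m
    have hdm := hd m
    simp only [psiP, optLab, hexp, Option.elim, Set.mem_diff, Set.mem_union,
      Set.mem_empty_iff_false]
    tauto
  · -- node to box
    left
    refine ⟨⟨i, (a, b)⟩, hE, ?_⟩
    subst hXe; subst hYe
    rw [flatLabel_append, flatLabel_append, flatLabel_single, flatLabel_pair]
    have hcross := (List.pairwise_append.mp hpw).2.2
    have hd : ∀ m ∈ M.label i a, m ∉ M.flatLabel p := by
      intro m hm ⟨u, hu, hmu⟩
      have hanc : M.Ancestor u ⟨i, a⟩ := hcross u hu ⟨i, a⟩ (by simp)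
      have := hR u ⟨i, a⟩ hanc
      rw [Set.eq_empty_iff_forall_notMem] at this
      exact this m ⟨hmu, hm⟩
    ext m
    have hdm := hd m
    simp only [psiP, optLab, hexp, Option.elim, Set.mem_diff, Set.mem_union]
    tauto
  · -- box to node
    right
    refine ⟨⟨i, j, (a, z, v)⟩, hE, ?_⟩
    subst hXe; subst hYe
    rw [flatLabel_append, flatLabel_append, flatLabel_pair, flatLabel_single]
    have hcross := (List.pairwise_append.mp hpw).2.2
    have hda : ∀ m ∈ M.label i a, m ∉ M.flatLabel p := by
      intro m hm ⟨u, hu, hmu⟩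
      have hanc : M.Ancestor u ⟨i, a⟩ := hcross u hu ⟨i, a⟩ (by simp)
      have := hR u ⟨i, a⟩ hanc
      rw [Set.eq_empty_iff_forall_notMem] at this
      exact this m ⟨hmu, hm⟩
    have hdz : ∀ m ∈ M.label j z, m ∉ M.flatLabel p := by
      intro m hm ⟨u, hu, hmu⟩
      have hanc : M.Ancestor u ⟨j, z⟩ := hcross u hu ⟨j, z⟩ (by simp)
      have := hR u ⟨j, z⟩ hanc
      rw [Set.eq_empty_iff_forall_notMem] at this
      exact this m ⟨hmu, hm⟩
    ext m
    have hdam := hda m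
    have hdzm := hdz m
    simp only [psiB, optLab, hexp, Option.elim, Set.mem_diff, Set.mem_union,
      Set.mem_empty_iff_false]
    tauto
  · -- box to box
    right
    refine ⟨⟨i, j, (a, z, b)⟩, hE, ?_⟩
    subst hXe; subst hYe
    rw [flatLabel_append, flatLabel_append, flatLabel_pair, flatLabel_pair]
    have hcross := (List.pairwise_append.mp hpw).2.2
    have hda : ∀ m ∈ M.label i a, m ∉ M.flatLabel p := by
      intro m hm ⟨u, hu, hmu⟩
      have hanc : M.Ancestor u ⟨i, a⟩ := hcross u hu ⟨i, a⟩ (by simp)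
      have := hR u ⟨i, a⟩ hanc
      rw [Set.eq_empty_iff_forall_notMem] at this
      exact this m ⟨hmu, hm⟩
    have hdz : ∀ m ∈ M.label j z, m ∉ M.flatLabel p := by
      intro m hm ⟨u, hu, hmu⟩
      have hanc : M.Ancestor u ⟨j, z⟩ := hcross u hu ⟨j, z⟩ (by simp)
      have := hR u ⟨j, z⟩ hanc
      rw [Set.eq_empty_iff_forall_notMem] at this
      exact this m ⟨hmu, hm⟩
    ext m
    have hdam := hda m
    have hdzm := hdz m
    simp only [psiB, optLab, hexp, Option.elim, Set.mem_diff, Set.mem_union]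
    tauto

end SuccinctAux
namespace SuccinctAux

open SHSM

variable {AP : Type}

lemma count (M : SHSM AP) (hR : M.Restricted) (n : ℕ)
    (D : (Fin n → Bool) → Set AP) (hD : Function.Injective D)
    (hreal : ∀ b, ∃ X Y : M.States,
      M.FlatTrans X.1 Y.1 ∧ M.flatLabel X.1 \ M.flatLabel Y.1 = D b) :
    2 ^ n ≤ M.size := by
  classical
  set EP : Set (Σ i : Fin M.h, M.V i × M.V i) :=
    {e | M.Eplain e.1 e.2.1 e.2.2} with hEP
  set EB : Set (Σ (i : Fin M.h) (j : Fin M.h), M.V i × M.V j × M.V i) :=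
    {e | M.Ebox e.1 e.2.2.1 e.2.1 e.2.2.2.1 e.2.2.2.2} with hEB
  have hex : ∀ b : Fin n → Bool, ∃ s : ↥EP ⊕ ↥EB,
      Sum.elim (fun e : ↥EP => psiP M e.1) (fun e : ↥EB => psiB M e.1) s = D b := by
    intro b
    obtain ⟨X, Y, hT, hDiff⟩ := hreal b
    rcases key M hR X.2 hT with ⟨e, he, heq⟩ | ⟨e, he, heq⟩
    · exact ⟨Sum.inl ⟨e, he⟩, by rw [Sum.elim_inl, ← heq, hDiff]⟩
    · exact ⟨Sum.inr ⟨e, he⟩, by rw [Sum.elim_inr, ← heq, hDiff]⟩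
  choose g hg using hex
  have hginj : Function.Injective g := by
    intro b b' hbb
    apply hD
    rw [← hg b, ← hg b', hbb]
  have h1 : (2 : ℕ) ^ n = Nat.card (Fin n → Bool) := by
    rw [Nat.card_eq_fintype_card, Fintype.card_fun]
    simp
  have h2 : Nat.card (Fin n → Bool) ≤ Nat.card (↥EP ⊕ ↥EB) :=
    Nat.card_le_card_of_injective g hginj
  have h3 : Nat.card (↥EP ⊕ ↥EB) = EP.ncard + EB.ncard := by
    rw [Nat.card_sum, Nat.card_coe_set_eq, Nat.card_coe_set_eq]
  have h4 : EP.ncard + EB.ncard ≤ M.size := by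
    rw [SHSM.size, ← hEP, ← hEB]
    omega
  omega

end SuccinctAux
namespace SuccinctAux

open SHSM

/-- The family of (unrestricted) SHSMs witnessing succinctness. -/
def Mn (n : ℕ) : SHSM ℕ where
  h := n + 2
  hpos := by omega
  V := fun _ => Fin 4
  Vfin := fun _ => inferInstance
  init := fun _ => ⟨0, by omega⟩
  out := fun _ => {⟨1, by omega⟩}
  label := fun i u =>
    if (i : ℕ) = 0 then (if (u : ℕ) = 1 then {m : ℕ | m ≤ n} else ∅)
    else if (u : ℕ) = 3 then {(i : ℕ) - 1} else ∅
  expand := fun i u =>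
    if (i : ℕ) = 0 then none
    else if 2 ≤ (u : ℕ) then some ⟨(i : ℕ) - 1, by have := i.isLt; omega⟩
    else none
  expand_lt := by
    intro i u j hj
    by_cases h1 : (i : ℕ) = 0 <;> simp [h1] at hj
    by_cases h2 : 2 ≤ (u : ℕ) <;> simp [h2] at hj
    rw [← hj]
    simp
    rw [Fin.lt_def, Fin.val_zero]
    omega
  init_node := by
    intro i
    by_cases h1 : (i : ℕ) = 0 <;> simp [h1]
  out_node := by
    intro i z hz
    simp only [Set.mem_singleton_iff] at hz
    subst hz
    by_cases h1 : (i : ℕ) = 0 <;> simp [h1]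
  Eplain := fun i u v =>
    (u : ℕ) = 0 ∧
      (if (i : ℕ) = 0 then (v : ℕ) = 1 else ((v : ℕ) = 2 ∨ (v : ℕ) = 3))
  Ebox := fun i u j z v =>
    1 ≤ (i : ℕ) ∧ (j : ℕ) = (i : ℕ) - 1 ∧ 2 ≤ (u : ℕ) ∧ (z : ℕ) = 1 ∧ (v : ℕ) = 1
  Eplain_node := by
    intro i u v huv
    have h0 := huv.1
    by_cases h1 : (i : ℕ) = 0 <;> simp [h1, h0]
  Ebox_ok := by
    intro i u j z v hb
    obtain ⟨h1, h2, h3, h4, h5⟩ := hb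
    constructor
    · have : ¬ (i : ℕ) = 0 := by omega
      simp [this, h3]
      exact Fin.ext (by simp; omega)
    · simp only [Set.mem_singleton_iff]
      exact Fin.ext (by simp [h4])

end SuccinctAux
namespace SuccinctAux

open SHSM

def mkL (n k : ℕ) : Fin (n + 2) := ⟨min k (n + 1), by omega⟩

/-- The vertex type of `Mn n`, in unfolded form. -/
abbrev VTn (n : ℕ) : Type := Σ _ : Fin (n + 2), Fin 4

lemma mkL_val (n k : ℕ) (h : k ≤ n + 1) : ((mkL n k : Fin (n + 2)) : ℕ) = k := by
  simp [mkL]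
  omega

/-- The vertices appearing in the distinguished states: level `0`: the `FULL`-labelled
exit node; level `1`: the unlabelled box; level `k+2`: the box chosen by bit `x k`. -/
def Fv (n : ℕ) (x : ℕ → Bool) (k : ℕ) : VTn n :=
  ⟨mkL n k,
    if k = 0 then ⟨1, by omega⟩
    else if k = 1 then ⟨2, by omega⟩
    else if x (k - 2) then ⟨3, by omega⟩ else ⟨2, by omega⟩⟩

/-- The exit node of machine `1`. -/
def v1 (n : ℕ) : VTn n := ⟨mkL n 1, ⟨1, by omega⟩⟩

def Zl (n : ℕ) (x : ℕ → Bool) : ℕ → List (VTn n)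
  | 0 => []
  | m + 1 => Fv n x (m + 2) :: Zl n x m

def Xl (n : ℕ) (x : ℕ → Bool) (m : ℕ) : List (VTn n) :=
  Zl n x m ++ [Fv n x 1, Fv n x 0]

def Yl (n : ℕ) (x : ℕ → Bool) (m : ℕ) : List (VTn n) :=
  Zl n x m ++ [v1 n]

lemma Fv_snd_ge (n : ℕ) (x : ℕ → Bool) (k : ℕ) (hk : 1 ≤ k) :
    2 ≤ ((Fv n x k).2 : ℕ) := by
  simp only [Fv]
  split_ifs <;> simp <;> omega

lemma expand_Fv (n : ℕ) (x : ℕ → Bool) (k : ℕ) (hk : 1 ≤ k) (hk2 : k ≤ n + 1) :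
    (Mn n).expand (Fv n x k).1 (Fv n x k).2 = some (mkL n (k - 1)) := by
  have h1 : ((Fv n x k).1 : ℕ) = k := mkL_val n k hk2
  have h2 : 2 ≤ ((Fv n x k).2 : ℕ) := Fv_snd_ge n x k hk
  have h3 : ¬ ((Fv n x k).1 : ℕ) = 0 := by omega
  show (if ((Fv n x k).1 : ℕ) = 0 then none
    else if 2 ≤ ((Fv n x k).2 : ℕ) then some ⟨((Fv n x k).1 : ℕ) - 1, by
      have := (Fv n x k).1.isLt; omega⟩ else none) = some (mkL n (k - 1))
  rw [if_neg h3, if_pos h2]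
  congr 1
  exact Fin.ext (by rw [mkL_val n (k-1) (by omega)]; simp [h1])

lemma stepF (n : ℕ) (x : ℕ → Bool) (k : ℕ) (hk : k + 1 ≤ n + 1) :
    (Mn n).stepRel (Fv n x (k + 1)) (Fv n x k) := by
  show (Mn n).expand _ _ = some (Fv n x k).1
  rw [expand_Fv n x (k+1) (by omega) hk]
  rfl

lemma stepFv1 (n : ℕ) (x : ℕ → Bool) (h : 2 ≤ n + 1) :
    (Mn n).stepRel (Fv n x 2) (v1 n) := by
  show (Mn n).expand _ _ = some (v1 n).1
  rw [expand_Fv n x 2 (by omega) h]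
  rfl

end SuccinctAux
namespace SuccinctAux

open SHSM

variable (n : ℕ) (x : ℕ → Bool)

lemma Xl_succ (m : ℕ) : Xl n x (m + 1) = Fv n x (m + 2) :: Xl n x m := rfl

lemma Yl_succ (m : ℕ) : Yl n x (m + 1) = Fv n x (m + 2) :: Yl n x m := rfl

lemma headX (m : ℕ) : (Xl n x m).head? = some (Fv n x (m + 1)) := by
  cases m <;> rfl

lemma headY0 : (Yl n x 0).head? = some (v1 n) := rfl

lemma headYs (m : ℕ) : (Yl n x (m + 1)).head? = some (Fv n x (m + 2)) := rfl

lemma chainX : ∀ m, m ≤ n → (Xl n x m).Chain' (Mn n).stepRel := by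
  intro m
  induction m with
  | zero =>
    intro _
    refine List.isChain_cons_cons.mpr ⟨stepF n x 0 (by omega), ?_⟩
    exact List.isChain_singleton _
  | succ m ih =>
    intro hm
    rw [Xl_succ]
    refine List.isChain_cons.mpr ⟨?_, ih (by omega)⟩
    intro y hy
    replace hy : y ∈ (Xl n x m).head? := hy
    rw [headX] at hy
    replace hy := Option.some_inj.mp hy
    subst hy
    exact stepF n x (m + 1) (by omega)

lemma chainY : ∀ m, m ≤ n → (Yl n x m).Chain' (Mn n).stepRel := by
  intro m
  induction m with
  | zero =>
    intro _
    simp only [Yl, Zl, List.nil_append]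
    exact List.isChain_singleton _
  | succ m ih =>
    intro hm
    rw [Yl_succ]
    refine List.isChain_cons.mpr ⟨?_, ih (by omega)⟩
    intro y hy
    cases m with
    | zero =>
      replace hy : y ∈ (Yl n x 0).head? := hy
      rw [headY0] at hy
      replace hy := Option.some_inj.mp hy
      subst hy
      exact stepFv1 n x (by omega)
    | succ m' =>
      replace hy : y ∈ (Yl n x (m' + 1)).head? := hy
      rw [headYs] at hy
      replace hy := Option.some_inj.mp hy
      subst hy
      exact stepF n x (m' + 2) (by omega)

lemma lastX (m : ℕ) : (Xl n x m).getLast? = some (Fv n x 0) := by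
  rw [show Xl n x m = (Zl n x m ++ [Fv n x 1]) ++ [Fv n x 0] by simp [Xl]]
  exact List.getLast?_concat

lemma lastY (m : ℕ) : (Yl n x m).getLast? = some (v1 n) := by
  rw [show Yl n x m = Zl n x m ++ [v1 n] from rfl]
  exact List.getLast?_concat

lemma nodeF0 : (Mn n).IsNode (Fv n x 0) := by
  show (if ((Fv n x 0).1 : ℕ) = 0 then none
    else if 2 ≤ ((Fv n x 0).2 : ℕ) then some ⟨((Fv n x 0).1 : ℕ) - 1, by
      have := (Fv n x 0).1.isLt; omega⟩ else none) = none
  rw [if_pos]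
  exact mkL_val n 0 (by omega)

lemma nodev1 : (Mn n).IsNode (v1 n) := by
  show (if ((v1 n).1 : ℕ) = 0 then none
    else if 2 ≤ ((v1 n).2 : ℕ) then some ⟨((v1 n).1 : ℕ) - 1, by
      have := (v1 n).1.isLt; omega⟩ else none) = none
  have h1 : ((v1 n).1 : ℕ) = 1 := mkL_val n 1 (by omega)
  rw [if_neg (by omega), if_neg (by simp [v1])]

lemma topFv : (Fv n x (n + 1)).1 = (Mn n).top := by
  apply Fin.ext
  show ((mkL n (n+1) : Fin (n+2)) : ℕ) = _
  rw [mkL_val n (n+1) (by omega)]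
  show n + 1 = (n + 2) - 1
  omega

lemma compX : (Mn n).Complete (Xl n x n) := by
  refine ⟨⟨?_, chainX n x n le_rfl⟩, ⟨Fv n x (n + 1), headX n x n, topFv n x⟩,
    ⟨Fv n x 0, lastX n x n, nodeF0 n x⟩⟩
  show Xl n x n ≠ ([] : List (VTn n))
  simp [Xl]

lemma compY : (Mn n).Complete (Yl n x n) := by
  refine ⟨⟨?_, chainY n x n le_rfl⟩, ?_, ⟨v1 n, lastY n x n, nodev1 n⟩⟩
  · show Yl n x n ≠ ([] : List (VTn n))
    simp [Yl]
  · cases n with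
    | zero => exact ⟨v1 0, headY0 0 x, by
        apply Fin.ext
        show ((mkL 0 1 : Fin 2) : ℕ) = _
        rw [mkL_val 0 1 (by omega)]
        rfl⟩
    | succ n' => exact ⟨Fv (n' + 1) x (n' + 2), headYs (n' + 1) x n', by
        have := topFv (n' + 1) x
        exact this⟩

end SuccinctAux
namespace SuccinctAux

open SHSM

variable (n : ℕ) (x : ℕ → Bool)

lemma ftXY : (Mn n).FlatTrans (Xl n x n) (Yl n x n) := by
  refine Or.inr (Or.inr (Or.inl
    ⟨Zl n x n, mkL n 1, ⟨2, by omega⟩, mkL n 0, ⟨1, by omega⟩, ⟨1, by omega⟩,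
      ?_, ?_, ?_, ?_⟩))
  · rfl
  · rfl
  · refine ⟨?_, ?_, by simp, by simp, by simp⟩
    · rw [mkL_val n 1 (by omega)]
    · rw [mkL_val n 0 (by omega), mkL_val n 1 (by omega)]
  · show (if ((mkL n 1 : Fin (n+2)) : ℕ) = 0 then none
      else if 2 ≤ ((⟨1, by omega⟩ : Fin 4) : ℕ) then some ⟨((mkL n 1 : Fin (n+2)) : ℕ) - 1, by
        have := (mkL n 1).isLt; omega⟩ else none) = none
    rw [if_neg (by rw [mkL_val n 1 (by omega)]; omega), if_neg (by norm_num)]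

lemma memZl (m : ℕ) (u : VTn n) :
    u ∈ Zl n x m ↔ ∃ k, k < m ∧ u = Fv n x (k + 2) := by
  induction m with
  | zero => simp [Zl]
  | succ m ih =>
    show u ∈ Fv n x (m + 2) :: Zl n x m ↔ _
    simp only [List.mem_cons, ih]
    constructor
    · rintro (rfl | ⟨k, hk, rfl⟩)
      · exact ⟨m, by omega, rfl⟩
      · exact ⟨k, by omega, rfl⟩
    · rintro ⟨k, hk, rfl⟩
      rcases Nat.lt_succ_iff_lt_or_eq.mp hk with hk' | rfl
      · exact Or.inr ⟨k, hk', rfl⟩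
      · exact Or.inl rfl

lemma labF0 : (Mn n).label (Fv n x 0).1 (Fv n x 0).2 = {m : ℕ | m ≤ n} := by
  show (if ((mkL n 0 : Fin (n+2)) : ℕ) = 0 then
      (if ((⟨1, by omega⟩ : Fin 4) : ℕ) = 1 then {m : ℕ | m ≤ n} else ∅)
    else if ((⟨1, by omega⟩ : Fin 4) : ℕ) = 3 then {((mkL n 0 : Fin (n+2)) : ℕ) - 1} else ∅)
      = {m : ℕ | m ≤ n}
  rw [if_pos (mkL_val n 0 (by omega)), if_pos (by norm_num)]

lemma labF1 : (Mn n).label (Fv n x 1).1 (Fv n x 1).2 = ∅ := by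
  show (if ((mkL n 1 : Fin (n+2)) : ℕ) = 0 then
      (if ((⟨2, by omega⟩ : Fin 4) : ℕ) = 1 then {m : ℕ | m ≤ n} else ∅)
    else if ((⟨2, by omega⟩ : Fin 4) : ℕ) = 3 then {((mkL n 1 : Fin (n+2)) : ℕ) - 1} else ∅)
      = ∅
  rw [if_neg (by rw [mkL_val n 1 (by omega)]; omega), if_neg (by norm_num)]

lemma labv1 : (Mn n).label (v1 n).1 (v1 n).2 = ∅ := by
  show (if ((mkL n 1 : Fin (n+2)) : ℕ) = 0 then
      (if ((⟨1, by omega⟩ : Fin 4) : ℕ) = 1 then {m : ℕ | m ≤ n} else ∅)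
    else if ((⟨1, by omega⟩ : Fin 4) : ℕ) = 3 then {((mkL n 1 : Fin (n+2)) : ℕ) - 1} else ∅)
      = ∅
  rw [if_neg (by rw [mkL_val n 1 (by omega)]; omega), if_neg (by norm_num)]

lemma labFk (k : ℕ) (hk : k < n) :
    (Mn n).label (Fv n x (k + 2)).1 (Fv n x (k + 2)).2
      = if x k then {k + 1} else ∅ := by
  by_cases hx : x k
  · show (if ((mkL n (k+2) : Fin (n+2)) : ℕ) = 0 then
        (if (((if k + 2 = 0 then ⟨1, by omega⟩ else if k + 2 = 1 then ⟨2, by omega⟩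
          else if x (k + 2 - 2) then ⟨3, by omega⟩ else ⟨2, by omega⟩ : Fin 4)) : ℕ) = 1
          then {m : ℕ | m ≤ n} else ∅)
      else if (((if k + 2 = 0 then ⟨1, by omega⟩ else if k + 2 = 1 then ⟨2, by omega⟩
          else if x (k + 2 - 2) then ⟨3, by omega⟩ else ⟨2, by omega⟩ : Fin 4)) : ℕ) = 3
          then {((mkL n (k+2) : Fin (n+2)) : ℕ) - 1} else ∅) = _
    rw [if_neg (by rw [mkL_val n (k+2) (by omega)]; omega)]
    rw [if_neg (show ¬ k + 2 = 0 by omega), if_neg (show ¬ k + 2 = 1 by omega)]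
    have hxx : x (k + 2 - 2) = true := by simpa using hx
    rw [if_pos hxx]
    rw [if_pos (show (((⟨3, by omega⟩ : Fin 4)) : ℕ) = 3 from rfl), if_pos hx,
      mkL_val n (k+2) (by omega)]
    norm_num
  · show (if ((mkL n (k+2) : Fin (n+2)) : ℕ) = 0 then
        (if (((if k + 2 = 0 then ⟨1, by omega⟩ else if k + 2 = 1 then ⟨2, by omega⟩
          else if x (k + 2 - 2) then ⟨3, by omega⟩ else ⟨2, by omega⟩ : Fin 4)) : ℕ) = 1
          then {m : ℕ | m ≤ n} else ∅)
      else if (((if k + 2 = 0 then ⟨1, by omega⟩ else if k + 2 = 1 then ⟨2, by omega⟩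
          else if x (k + 2 - 2) then ⟨3, by omega⟩ else ⟨2, by omega⟩ : Fin 4)) : ℕ) = 3
          then {((mkL n (k+2) : Fin (n+2)) : ℕ) - 1} else ∅) = _
    rw [if_neg (by rw [mkL_val n (k+2) (by omega)]; omega)]
    rw [if_neg (show ¬ k + 2 = 0 by omega), if_neg (show ¬ k + 2 = 1 by omega)]
    have hxx : ¬ x (k + 2 - 2) = true := by simpa using hx
    rw [if_neg hxx]
    rw [if_neg (show ¬ (((⟨2, by omega⟩ : Fin 4)) : ℕ) = 3 from by norm_num), if_neg hx]

lemma flX : (Mn n).flatLabel (Xl n x n) = {m : ℕ | m ≤ n} := by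
  ext m
  simp only [SHSM.flatLabel, Set.mem_setOf_eq]
  constructor
  · rintro ⟨u, hu, hm⟩
    have hu' : u ∈ Zl n x n ∨ u = Fv n x 1 ∨ u = Fv n x 0 := by
      rcases List.mem_append.mp (show (u : VTn n) ∈ Zl n x n ++ [Fv n x 1, Fv n x 0] from hu) with h | h
      · exact Or.inl h
      · rcases List.mem_cons.mp h with h | h
        · exact Or.inr (Or.inl h)
        · exact Or.inr (Or.inr (List.mem_singleton.mp h))
    rcases hu' with hz | rfl | rfl
    · obtain ⟨k, hk, rfl⟩ := (memZl n x n u).mp hz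
      rw [labFk n x k hk] at hm
      by_cases hx : x k
      · simp only [hx, if_true, Set.mem_singleton_iff] at hm
        omega
      · simp only [hx, if_false] at hm
        exact absurd hm (Set.notMem_empty m)
    · rw [labF1] at hm
      exact absurd hm (Set.notMem_empty m)
    · rw [labF0] at hm
      exact hm
  · intro hm
    refine ⟨Fv n x 0, by show Fv n x 0 ∈ Xl n x n; simp [Xl], ?_⟩
    rw [labF0]
    exact hm

lemma flY : (Mn n).flatLabel (Yl n x n)
    = {m : ℕ | ∃ k, k < n ∧ x k = true ∧ m = k + 1} := by
  ext m
  simp only [SHSM.flatLabel, Set.mem_setOf_eq]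
  constructor
  · rintro ⟨u, hu, hm⟩
    have hu' : u ∈ Zl n x n ∨ u = v1 n := by
      exact (List.mem_append.mp (show (u : VTn n) ∈ Zl n x n ++ [v1 n] from hu)).imp id List.mem_singleton.mp
    rcases hu' with hz | rfl
    · obtain ⟨k, hk, rfl⟩ := (memZl n x n u).mp hz
      rw [labFk n x k hk] at hm
      by_cases hx : x k
      · simp only [hx, if_true, Set.mem_singleton_iff] at hm
        exact ⟨k, hk, hx, hm⟩
      · simp only [hx, if_false] at hm
        exact absurd hm (Set.notMem_empty m)
    · rw [labv1] at hm
      exact absurd hm (Set.notMem_empty m)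
  · rintro ⟨k, hk, hx, rfl⟩
    refine ⟨Fv n x (k + 2), ?_, ?_⟩
    · show Fv n x (k + 2) ∈ Yl n x n
      simp only [Yl, List.mem_append]
      exact Or.inl ((memZl n x n _).mpr ⟨k, hk, rfl⟩)
    · rw [labFk n x k hk]
      simp [hx]

end SuccinctAux
namespace SuccinctAux

open SHSM

lemma cardVt (n : ℕ) : Fintype.card (Mn n).Vt = (n + 2) * 4 := by
  have e : (Mn n).Vt ≃ (Σ _ : Fin (n + 2), Fin 4) := Equiv.cast rfl
  rw [Fintype.card_congr e]
  simp [Fintype.card_sigma]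

lemma cardEP (n : ℕ) :
    ({e : Σ i : Fin (Mn n).h, (Mn n).V i × (Mn n).V i |
        (Mn n).Eplain e.1 e.2.1 e.2.2}).ncard ≤ (n + 2) * 16 := by
  have h1 : ({e : Σ i : Fin (Mn n).h, (Mn n).V i × (Mn n).V i |
      (Mn n).Eplain e.1 e.2.1 e.2.2}).ncard
      ≤ (Set.univ : Set (Σ i : Fin (Mn n).h, (Mn n).V i × (Mn n).V i)).ncard :=
    Set.ncard_le_ncard (Set.subset_univ _) Set.finite_univ
  rw [Set.ncard_univ] at h1
  have e : (Σ i : Fin (Mn n).h, (Mn n).V i × (Mn n).V i)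
      ≃ (Σ _ : Fin (n + 2), Fin 4 × Fin 4) := Equiv.cast rfl
  rw [Nat.card_congr e, Nat.card_eq_fintype_card] at h1
  simpa [Fintype.card_sigma] using h1

lemma cardEB (n : ℕ) :
    ({e : Σ (i : Fin (Mn n).h) (j : Fin (Mn n).h), (Mn n).V i × (Mn n).V j × (Mn n).V i |
        (Mn n).Ebox e.1 e.2.2.1 e.2.1 e.2.2.2.1 e.2.2.2.2}).ncard
      ≤ (n + 2) * ((n + 2) * 64) := by
  have h1 := Set.ncard_le_ncard
    (Set.subset_univ ({e : Σ (i : Fin (Mn n).h) (j : Fin (Mn n).h),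
        (Mn n).V i × (Mn n).V j × (Mn n).V i |
        (Mn n).Ebox e.1 e.2.2.1 e.2.1 e.2.2.2.1 e.2.2.2.2})) Set.finite_univ
  rw [Set.ncard_univ] at h1
  have e : (Σ (i : Fin (Mn n).h) (j : Fin (Mn n).h),
      (Mn n).V i × (Mn n).V j × (Mn n).V i)
      ≃ (Σ _ : Fin (n + 2), Σ _ : Fin (n + 2), Fin 4 × Fin 4 × Fin 4) := Equiv.cast rfl
  rw [Nat.card_congr e, Nat.card_eq_fintype_card] at h1
  simpa [Fintype.card_sigma, mul_comm] using h1

lemma sizeMn (n : ℕ) : (Mn n).size ≤ 100 * (n + 2) ^ 2 := by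
  have h1 := cardVt n
  have h2 := cardEP n
  have h3 := cardEB n
  rw [SHSM.size, h1]
  have hb : (n + 2) * 4 + (n + 2) * 16 + (n + 2) * ((n + 2) * 64) ≤ 100 * (n + 2) ^ 2 := by
    nlinarith [sq_nonneg (n + 2)]
  omega

/-- Extension of a finite bit vector. -/
def xe (n : ℕ) (b : Fin n → Bool) : ℕ → Bool :=
  fun k => if h : k < n then b ⟨k, h⟩ else false

def Dx (n : ℕ) (b : Fin n → Bool) : Set ℕ :=
  {m : ℕ | m ≤ n} \ {m : ℕ | ∃ k, k < n ∧ xe n b k = true ∧ m = k + 1}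

lemma Dx_inj (n : ℕ) : Function.Injective (Dx n) := by
  intro b b' h
  funext t
  have hmem : ∀ c : Fin n → Bool,
      (((t : ℕ) + 1 ∈ {m : ℕ | ∃ k, k < n ∧ xe n c k = true ∧ m = k + 1}) ↔ c t = true) := by
    intro c
    constructor
    · rintro ⟨k, hk, hc, he⟩
      have hkt : k = (t : ℕ) := by omega
      subst hkt
      rw [xe] at hc
      rw [dif_pos hk] at hc
      simpa [Fin.eta] using hc
    · intro hc
      exact ⟨(t : ℕ), t.isLt, by simp [xe, t.isLt, hc], rfl⟩
  have h1 : ((t : ℕ) + 1 ∈ Dx n b) ↔ ((t : ℕ) + 1 ∈ Dx n b') := by rw [h]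
  have ht : (t : ℕ) + 1 ≤ n := t.isLt
  simp only [Dx, Set.mem_diff, Set.mem_setOf_eq, ht, true_and, hmem b, hmem b'] at h1
  cases hb : b t <;> cases hb' : b' t <;> simp [hb, hb'] at h1 ⊢

end SuccinctAux

/-- SHSMs can be exponentially more succinct than restricted SHSMs: there are a constant
`c > 0`, a polynomial `p`, and SHSMs `M_n` of size at most `p(n)` such that every
restricted SHSM whose flat Kripke structure is isomorphic to `M_n^F` has size at least
`2^{cn}`. -/
theorem shsm_exp_succinct_vs_restricted :
    ∃ (AP : Type) (c : ℝ), 0 < c ∧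
      ∃ (p : Polynomial ℕ) (Mfam : ℕ → SHSM AP),
        ∀ n : ℕ, (Mfam n).size ≤ p.eval n ∧
          ∀ M' : SHSM AP, M'.Restricted → FlatIso M' (Mfam n) →
            (2 : ℝ) ^ (c * n) ≤ (M'.size : ℝ) := by
  classical
  refine ⟨ℕ, 1, one_pos,
    Polynomial.C 100 * (Polynomial.X + Polynomial.C 2) ^ 2,
    fun n => SuccinctAux.Mn n, fun n => ⟨?_, ?_⟩⟩
  · have h := SuccinctAux.sizeMn n
    have he : (Polynomial.C 100 * (Polynomial.X + Polynomial.C 2) ^ 2).eval n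
        = 100 * (n + 2) ^ 2 := by
      simp [Polynomial.eval_mul, Polynomial.eval_pow, Polynomial.eval_add]
    rw [he]
    exact h
  · intro M' hres hiso
    obtain ⟨f, -, htrans, hlab⟩ := hiso
    have hmain : 2 ^ n ≤ M'.size := by
      apply SuccinctAux.count M' hres n (SuccinctAux.Dx n) (SuccinctAux.Dx_inj n)
      intro b
      let SX : (SuccinctAux.Mn n).States :=
        ⟨SuccinctAux.Xl n (SuccinctAux.xe n b) n, SuccinctAux.compX n (SuccinctAux.xe n b)⟩
      let SY : (SuccinctAux.Mn n).States :=
        ⟨SuccinctAux.Yl n (SuccinctAux.xe n b) n, SuccinctAux.compY n (SuccinctAux.xe n b)⟩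
      refine ⟨f.symm SX, f.symm SY, ?_, ?_⟩
      · apply (htrans _ _).mpr
        rw [Equiv.apply_symm_apply, Equiv.apply_symm_apply]
        exact SuccinctAux.ftXY n (SuccinctAux.xe n b)
      · rw [hlab (f.symm SX), hlab (f.symm SY), Equiv.apply_symm_apply,
          Equiv.apply_symm_apply]
        show (SuccinctAux.Mn n).flatLabel SX.1 \ (SuccinctAux.Mn n).flatLabel SY.1
          = SuccinctAux.Dx n b
        rw [show (SX.1 : List (SuccinctAux.Mn n).Vt)
            = SuccinctAux.Xl n (SuccinctAux.xe n b) n from rfl,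
          show (SY.1 : List (SuccinctAux.Mn n).Vt)
            = SuccinctAux.Yl n (SuccinctAux.xe n b) n from rfl,
          SuccinctAux.flX n (SuccinctAux.xe n b), SuccinctAux.flY n (SuccinctAux.xe n b)]
        rfl
    have h1 : ((2 : ℝ)) ^ ((1 : ℝ) * (n : ℝ)) = (((2 : ℕ) ^ n : ℕ) : ℝ) := by
      rw [one_mul, Real.rpow_natCast]
      push_cast
      ring
    rw [h1]
    exact_mod_cast hmain
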